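/- Let P ∈ M_{p×m}(ℤ_{≥0}), let B₁ be an n×n skew-symmetrizable integer matrix, and let B₂ ∈ M_{m×n}(ℤ) be column sign-coherent. Then for each 1 ≤ k ≤ n, mutating the stacked matrix with lower part PB₂ equals applying the block-diagonal matrix diag(I_n, P) to the mutation of the stacked matrix with lower part B₂: μ_k([B₁; PB₂]) = diag(I_n, P) · μ_k([B₁; B₂]). -/

import Mathlib

/-- Mutation in direction `k` of an `(n+m) × n` integer matrix, rows indexed by
`Fin n ⊕ Fin m` (the principal part is the `Sum.inl` block). -/
def mutate {n m : ℕ} (k : Fin n) (B : Matrix (Fin n ⊕ Fin m) (Fin n) ℤ) :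
    Matrix (Fin n ⊕ Fin m) (Fin n) ℤ :=
  fun i j =>
    if i = Sum.inl k ∨ j = k then -B i j
    else B i j + Int.sign (B i k) * max (B i k * B (Sum.inl k) j) 0

/-- A matrix is column sign-coherent if any two entries in the same column
have product ≥ 0 (i.e. any two nonzero entries in a column share the same sign). -/
def ColSgnCoh {m n : ℕ} (A : Matrix (Fin m) (Fin n) ℤ) : Prop :=
  ∀ (i i' : Fin m) (j : Fin n), 0 ≤ A i j * A i' j

lemma key_sign (x e c : ℤ) (h : 0 ≤ x * e) (h2 : x ≠ 0 → e ≠ 0) :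
    Int.sign x * max (x * c) 0 = x * max (Int.sign e * c) 0 := by
  rcases lt_trichotomy x 0 with hx | hx | hx
  · have he : e < 0 := by
      rcases lt_trichotomy e 0 with h' | h' | h'
      · exact h'
      · exact absurd h' (h2 hx.ne)
      · nlinarith
    rw [Int.sign_eq_neg_one_of_neg hx, Int.sign_eq_neg_one_of_neg he]
    rcases le_total c 0 with hc | hc
    · rw [max_eq_left (by nlinarith : (0:ℤ) ≤ x * c),
        max_eq_left (by nlinarith : (0:ℤ) ≤ -1 * c)]
      ring
    · rw [max_eq_right (by nlinarith : x * c ≤ 0),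
        max_eq_right (by nlinarith : (-1:ℤ) * c ≤ 0)]
      ring
  · simp [hx]
  · have he : 0 < e := by
      rcases lt_trichotomy e 0 with h' | h' | h'
      · nlinarith
      · exact absurd h' (h2 hx.ne')
      · exact h'
    rw [Int.sign_eq_one_of_pos hx, Int.sign_eq_one_of_pos he]
    rcases le_total c 0 with hc | hc
    · rw [max_eq_right (by nlinarith : x * c ≤ 0),
        max_eq_right (by nlinarith : (1:ℤ) * c ≤ 0)]
      ring
    · rw [max_eq_left (by nlinarith : (0:ℤ) ≤ x * c),
        max_eq_left (by nlinarith : (0:ℤ) ≤ 1 * c)]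
      ring

theorem mut_mul_nonneg {p m n : ℕ} (P : Matrix (Fin p) (Fin m) ℤ)
    (hP : ∀ i j, 0 ≤ P i j)
    (B₁ : Matrix (Fin n) (Fin n) ℤ)
    (S : Fin n → ℤ) (hS : ∀ i, 0 < S i)
    (hskew : ∀ i j, S i * B₁ i j = -(S j * B₁ j i))
    (B₂ : Matrix (Fin m) (Fin n) ℤ) (hB₂ : ColSgnCoh B₂)
    (k : Fin n) :
    mutate k (Matrix.fromRows B₁ (P * B₂)) =
      Matrix.fromBlocks (1 : Matrix (Fin n) (Fin n) ℤ) 0 0 P *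
        mutate k (Matrix.fromRows B₁ B₂) := by
  -- choose a reference entry e for column k of B₂
  classical
  obtain ⟨e, he1, he2⟩ : ∃ e : ℤ, (∀ l, 0 ≤ B₂ l k * e) ∧
      ((∃ l, B₂ l k ≠ 0) → e ≠ 0) := by
    by_cases h : ∃ l, B₂ l k ≠ 0
    · obtain ⟨l0, hl0⟩ := h
      exact ⟨B₂ l0 k, fun l => hB₂ l l0 k, fun _ => hl0⟩
    · exact ⟨0, fun l => by simp, fun h' => absurd h' h⟩
  funext i j
  rw [Matrix.mul_apply, Fintype.sum_sum_type]
  cases i with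
  | inl i =>
    simp only [Matrix.fromBlocks_apply₁₁, Matrix.fromBlocks_apply₁₂,
      Matrix.zero_apply, zero_mul, Finset.sum_const_zero, add_zero]
    rw [Finset.sum_eq_single i (fun b _ hb => by
        simp [Matrix.one_apply_ne (Ne.symm hb)]) (by simp)]
    simp [mutate, Matrix.fromRows_apply_inl]
  | inr i =>
    simp only [Matrix.fromBlocks_apply₂₁, Matrix.fromBlocks_apply₂₂,
      Matrix.zero_apply, zero_mul, Finset.sum_const_zero, zero_add]
    by_cases hj : j = k
    · simp only [mutate, Matrix.fromRows_apply_inl, Matrix.fromRows_apply_inr, hj, or_true, if_pos, Matrix.of_apply,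
        Sum.elim_inr, Matrix.mul_apply, mul_neg, Finset.sum_neg_distrib]
    · have hcond : ∀ x : Fin m, ¬((Sum.inr x : Fin n ⊕ Fin m) = Sum.inl k ∨ j = k) := by
        simp [hj]
      simp only [mutate, Matrix.fromRows_apply_inl, Matrix.fromRows_apply_inr, Matrix.of_apply, Sum.elim_inr, Sum.elim_inl]
      rw [if_neg (by simp [hj] : ¬((Sum.inr i : Fin n ⊕ Fin p) = Sum.inl k ∨ j = k))]
      rw [Finset.sum_congr rfl (fun x _ => by
        rw [if_neg (hcond x), key_sign (B₂ x k) e (B₁ k j) (he1 x) (fun hx => he2 ⟨x, hx⟩)])]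
      have hxe : 0 ≤ (P * B₂) i k * e := by
        rw [Matrix.mul_apply, Finset.sum_mul]
        exact Finset.sum_nonneg fun l _ => by
          rw [mul_assoc]; exact mul_nonneg (hP i l) (he1 l)
      have hxne : (P * B₂) i k ≠ 0 → e ≠ 0 := by
        intro hx he0
        apply hx
        rw [Matrix.mul_apply]
        refine Finset.sum_eq_zero fun l _ => ?_
        have : B₂ l k = 0 := by by_contra h'; exact he2 ⟨l, h'⟩ he0
        simp [this]
      rw [key_sign _ e _ hxe hxne]
      simp only [Matrix.mul_apply, mul_add, Finset.sum_add_distrib, Finset.sum_mul, mul_assoc]
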